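/- arXiv:2201.01597 — 2 statements merged into one kernel-verified Lean document; each statement's English description precedes it below -/
import Mathlib

section
/- Let Ω ⊂ ℝ³ be a measurable set and let f : Ω × ℝ³ → ℝ be a nonnegative measurable function. Suppose there exist constants M > 0 and κ₀ > 1 such that f(x,v) ≤ M for almost every (x,v) ∈ Ω × ℝ³, and ∫_Ω ∫_{ℝ³} |v|^κ f(x,v) dv dx ≤ M for every κ ∈ [0,κ₀]. Then for every p ∈ [1, (κ₀+3)/4] there exists a constant C, depending only on M, κ₀ and p (in particular not on f), such that the vector-valued function j(x) := ∫_{ℝ³} v f(x,v) dv satisfies ‖j‖_{L^p(Ω)} ≤ C. -/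
open MeasureTheory Set

noncomputable section

abbrev E3 : Type := EuclideanSpace ℝ (Fin 3)

/-- The volume of the unit ball in `E3`, as a real number. -/
def B3 : ℝ := ((volume : Measure E3) (Metric.ball 0 1)).toReal

lemma B3_nonneg : 0 ≤ B3 := ENNReal.toReal_nonneg

lemma vol_ball_one : (volume : Measure E3) (Metric.ball 0 1) = ENNReal.ofReal B3 :=
  (ENNReal.ofReal_toReal measure_ball_lt_top.ne).symm

/-- Splitting lemma: split the first moment at radius `R`. -/
lemma splitA (M κ R : ℝ) (hM : 0 < M) (hκ : 1 ≤ κ) (hR : 0 < R)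
    (g : E3 → ℝ) (hg0 : ∀ v, 0 ≤ g v) (hgM : ∀ᵐ v : E3, g v ≤ M) :
    (∫⁻ v : E3, ENNReal.ofReal (‖v‖ * g v))
      ≤ ENNReal.ofReal (M * B3 * R ^ (4:ℝ))
        + ENNReal.ofReal (R ^ (1 - κ)) * ∫⁻ v : E3, ENNReal.ofReal (‖v‖ ^ κ * g v) := by
  have hball : MeasurableSet (Metric.closedBall (0:E3) R) := measurableSet_closedBall
  rw [← lintegral_add_compl (fun v : E3 => ENNReal.ofReal (‖v‖ * g v)) hball]
  gcongr
  · -- ball part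
    calc (∫⁻ v in Metric.closedBall (0:E3) R, ENNReal.ofReal (‖v‖ * g v))
        ≤ ∫⁻ _ in Metric.closedBall (0:E3) R, ENNReal.ofReal (R * M) := by
          refine lintegral_mono_ae ?_
          filter_upwards [ae_restrict_of_ae hgM,
            ae_restrict_mem hball] with v hvM hvR
          refine ENNReal.ofReal_le_ofReal ?_
          have hv : ‖v‖ ≤ R := by simpa [mem_closedBall_zero_iff] using hvR
          exact mul_le_mul hv hvM (hg0 v) hR.le
      _ = ENNReal.ofReal (R * M) * volume (Metric.closedBall (0:E3) R) :=
          setLIntegral_const _ _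
      _ ≤ ENNReal.ofReal (M * B3 * R ^ (4:ℝ)) := by
          rw [Measure.addHaar_closedBall _ _ hR.le, vol_ball_one,
            finrank_euclideanSpace_fin, ← ENNReal.ofReal_mul (by positivity),
            ← ENNReal.ofReal_mul (by positivity)]
          refine ENNReal.ofReal_le_ofReal (le_of_eq ?_)
          have h4 : R ^ (4:ℝ) = R ^ (4:ℕ) := by
            rw [← Real.rpow_natCast R 4]; norm_num
          rw [h4]; ring
  · -- tail part
    calc (∫⁻ v in (Metric.closedBall (0:E3) R)ᶜ, ENNReal.ofReal (‖v‖ * g v))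
        ≤ ∫⁻ v in (Metric.closedBall (0:E3) R)ᶜ,
            ENNReal.ofReal (R ^ (1 - κ)) * ENNReal.ofReal (‖v‖ ^ κ * g v) := by
          refine lintegral_mono_ae ?_
          filter_upwards [ae_restrict_mem hball.compl] with v hv
          have hvR : R < ‖v‖ := by
            simp only [mem_compl_iff, Metric.mem_closedBall, dist_zero_right, not_le] at hv
            exact hv
          rw [← ENNReal.ofReal_mul (by positivity)]
          refine ENNReal.ofReal_le_ofReal ?_
          have h1 : ‖v‖ = ‖v‖ ^ (1 - κ) * ‖v‖ ^ κ := by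
            rw [← Real.rpow_add (hR.trans hvR), sub_add_cancel, Real.rpow_one]
          have h2 : ‖v‖ ^ (1 - κ) ≤ R ^ (1 - κ) :=
            Real.rpow_le_rpow_of_nonpos hR hvR.le (by linarith)
          calc ‖v‖ * g v = ‖v‖ ^ (1 - κ) * (‖v‖ ^ κ * g v) := by
                rw [← mul_assoc, ← h1]
            _ ≤ R ^ (1 - κ) * (‖v‖ ^ κ * g v) :=
                mul_le_mul_of_nonneg_right h2
                  (mul_nonneg (Real.rpow_nonneg (norm_nonneg v) κ) (hg0 v))
      _ = ENNReal.ofReal (R ^ (1 - κ)) * ∫⁻ v in (Metric.closedBall (0:E3) R)ᶜ,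
            ENNReal.ofReal (‖v‖ ^ κ * g v) :=
          lintegral_const_mul' _ _ ENNReal.ofReal_ne_top
      _ ≤ ENNReal.ofReal (R ^ (1 - κ)) * ∫⁻ v : E3, ENNReal.ofReal (‖v‖ ^ κ * g v) := by
          gcongr
          exact Measure.restrict_le_self

/-- The norm of the vector integral is bounded by the lintegral of the first moment. -/
lemma normj (g : E3 → ℝ) (hg : Measurable g) (hg0 : ∀ v, 0 ≤ g v) :
    ENNReal.ofReal ‖∫ v : E3, g v • v‖ ≤ ∫⁻ v : E3, ENNReal.ofReal (‖v‖ * g v) := by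
  by_cases hint : Integrable (fun v : E3 => g v • v)
  · have h1 : ‖∫ v : E3, g v • v‖ ≤ ∫ v : E3, ‖g v • v‖ :=
      norm_integral_le_integral_norm _
    have h2 : ENNReal.ofReal (∫ v : E3, ‖g v • v‖)
        = ∫⁻ v : E3, ENNReal.ofReal ‖g v • v‖ :=
      ofReal_integral_eq_lintegral_ofReal hint.norm
        (Filter.Eventually.of_forall fun v => norm_nonneg _)
    calc ENNReal.ofReal ‖∫ v : E3, g v • v‖
        ≤ ENNReal.ofReal (∫ v : E3, ‖g v • v‖) := ENNReal.ofReal_le_ofReal h1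
      _ = ∫⁻ v : E3, ENNReal.ofReal ‖g v • v‖ := h2
      _ = ∫⁻ v : E3, ENNReal.ofReal (‖v‖ * g v) := by
          refine lintegral_congr fun v => ?_
          rw [norm_smul, Real.norm_eq_abs, abs_of_nonneg (hg0 v), mul_comm]
  · rw [integral_undef hint]
    simp

/-- Key pointwise estimate. -/
lemma key (M κ p : ℝ) (hM : 0 < M) (hκ : 1 ≤ κ) (hp : 0 < p) (hpκ : κ + 3 = 4 * p)
    (g : E3 → ℝ) (hg : Measurable g) (hg0 : ∀ v, 0 ≤ g v) (hgM : ∀ᵐ v : E3, g v ≤ M) :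
    (ENNReal.ofReal ‖∫ v : E3, g v • v‖) ^ p
      ≤ ENNReal.ofReal (M * B3 + 1) ^ p * ∫⁻ v : E3, ENNReal.ofReal (‖v‖ ^ κ * g v) := by
  set ρ : ENNReal := ∫⁻ v : E3, ENNReal.ofReal (‖v‖ ^ κ * g v) with hρ
  have hC1 : (0:ℝ) < M * B3 + 1 := by nlinarith [B3_nonneg]
  -- main claim: ofReal ‖j‖ ≤ ofReal (M*B3+1) * ρ ^ (1/p)
  have main : ENNReal.ofReal ‖∫ v : E3, g v • v‖
      ≤ ENNReal.ofReal (M * B3 + 1) * ρ ^ (1/p) := by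
    rcases eq_or_ne ρ ⊤ with h | hfin
    · rw [h, ENNReal.top_rpow_of_pos (by positivity),
        ENNReal.mul_top (ENNReal.ofReal_pos.mpr hC1).ne']
      exact le_top
    rcases eq_or_ne ρ 0 with h0 | h0
    · -- ρ = 0 : the integrand vanishes a.e.
      have hz : ∀ᵐ v : E3, ENNReal.ofReal (‖v‖ ^ κ * g v) = 0 := by
        have := (lintegral_eq_zero_iff (by
          exact ((measurable_norm.pow_const κ).mul hg).ennreal_ofReal)).mp h0
        filter_upwards [this] with v hv using hv
      have hz2 : ∀ᵐ v : E3, ENNReal.ofReal (‖v‖ * g v) = 0 := by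
        have hne : ∀ᵐ v : E3, v ≠ 0 := by
          have : (volume : Measure E3) {(0:E3)} = 0 := measure_singleton 0
          rw [ae_iff]
          simpa [Set.setOf_eq_eq_singleton'] using this
        filter_upwards [hz, hne] with v hv hv0
        have hnv : 0 < ‖v‖ := norm_pos_iff.mpr hv0
        have : ‖v‖ ^ κ * g v ≤ 0 := by
          by_contra hcon
          push_neg at hcon
          exact absurd hv (by simp [ENNReal.ofReal_eq_zero, not_le, hcon])
        have hgv : g v = 0 := le_antisymm (by nlinarith [Real.rpow_pos_of_pos hnv κ]) (hg0 v)
        simp [hgv]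
      have hL : (∫⁻ v : E3, ENNReal.ofReal (‖v‖ * g v)) = 0 := lintegral_eq_zero_iff' (by
        exact ((measurable_norm.mul hg).ennreal_ofReal).aemeasurable) |>.mpr hz2
      calc ENNReal.ofReal ‖∫ v : E3, g v • v‖
          ≤ ∫⁻ v : E3, ENNReal.ofReal (‖v‖ * g v) := normj g hg hg0
        _ = 0 := hL
        _ ≤ _ := zero_le
    · -- 0 < ρ < ∞
      set r : ℝ := ρ.toReal with hr
      have hrpos : 0 < r := ENNReal.toReal_pos h0 hfin
      set R : ℝ := r ^ (1 / (κ + 3)) with hR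
      have hRpos : 0 < R := Real.rpow_pos_of_pos hrpos _
      have hκ3 : (0:ℝ) < κ + 3 := by linarith
      have hq : (4:ℝ) / (κ + 3) = 1 / p := by
        rw [hpκ]; field_simp
      have hR4 : R ^ (4:ℝ) = r ^ (1/p) := by
        rw [hR, ← Real.rpow_mul hrpos.le, ← hq]
        congr 1
        ring
      have hRt : R ^ (1 - κ) * r = r ^ (1/p) := by
        rw [hR, ← Real.rpow_mul hrpos.le]
        nth_rewrite 2 [show r = r ^ (1:ℝ) by rw [Real.rpow_one]]
        rw [← Real.rpow_add hrpos, ← hq]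
        congr 1
        field_simp
        ring
      have hρr : ρ = ENNReal.ofReal r := (ENNReal.ofReal_toReal hfin).symm
      calc ENNReal.ofReal ‖∫ v : E3, g v • v‖
          ≤ ∫⁻ v : E3, ENNReal.ofReal (‖v‖ * g v) := normj g hg hg0
        _ ≤ ENNReal.ofReal (M * B3 * R ^ (4:ℝ)) + ENNReal.ofReal (R ^ (1 - κ)) * ρ :=
            splitA M κ R hM hκ hRpos g hg0 hgM
        _ = ENNReal.ofReal (M * B3 * r ^ (1/p)) + ENNReal.ofReal (R ^ (1 - κ) * r) := by
            rw [hR4, hρr, ← ENNReal.ofReal_mul (Real.rpow_nonneg hRpos.le (1 - κ))]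
        _ = ENNReal.ofReal ((M * B3 + 1) * r ^ (1/p)) := by
            rw [hRt, ← ENNReal.ofReal_add
              (mul_nonneg (mul_nonneg hM.le B3_nonneg) (Real.rpow_nonneg hrpos.le _))
              (Real.rpow_nonneg hrpos.le _)]
            ring_nf
        _ = ENNReal.ofReal (M * B3 + 1) * ρ ^ (1/p) := by
            rw [hρr, ENNReal.ofReal_rpow_of_pos hrpos,
              ← ENNReal.ofReal_mul hC1.le]
  -- raise to the power p
  calc (ENNReal.ofReal ‖∫ v : E3, g v • v‖) ^ p
      ≤ (ENNReal.ofReal (M * B3 + 1) * ρ ^ (1/p)) ^ p :=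
        ENNReal.rpow_le_rpow main hp.le
    _ = ENNReal.ofReal (M * B3 + 1) ^ p * ρ := by
        rw [ENNReal.mul_rpow_of_nonneg _ _ hp.le, ← ENNReal.rpow_mul,
          one_div, inv_mul_cancel₀ hp.ne', ENNReal.rpow_one]

/-- `L^p` bound on the first velocity moment
`j(x) = ∫_{ℝ³} v f(x,v) dv` for bounded `f` with bounded velocity moments
up to order `κ₀ > 1`, for `p ∈ [1, (κ₀+3)/4]`, with constant depending only
on `M`, `κ₀` and `p`. -/
theorem stmt1 (M κ₀ : ℝ) (hM : 0 < M) (hκ₀ : 1 < κ₀)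
    (p : ℝ) (hp1 : 1 ≤ p) (hp2 : p ≤ (κ₀ + 3) / 4) :
    ∃ C : ℝ, 0 < C ∧
      ∀ (Ω : Set E3) (f : E3 × E3 → ℝ),
        MeasurableSet Ω →
        Measurable f →
        (∀ x v : E3, 0 ≤ f (x, v)) →
        (∀ᵐ z ∂((volume.restrict Ω).prod (volume : Measure E3)), f z ≤ M) →
        (∀ κ : ℝ, 0 ≤ κ → κ ≤ κ₀ →
          (∫⁻ x in Ω, ∫⁻ v : E3, ENNReal.ofReal (‖v‖ ^ κ * f (x, v)))
            ≤ ENNReal.ofReal M) →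
        (∫⁻ x in Ω, (ENNReal.ofReal ‖∫ v : E3, f (x, v) • v‖) ^ p) ^ (1 / p)
          ≤ ENNReal.ofReal C := by
  have hp : (0:ℝ) < p := by linarith
  set κ : ℝ := 4 * p - 3 with hκdef
  have hκ1 : 1 ≤ κ := by simp only [hκdef]; linarith
  have hκκ₀ : κ ≤ κ₀ := by simp only [hκdef]; linarith
  have hpκ : κ + 3 = 4 * p := by simp [hκdef]
  have hC1 : (0:ℝ) < M * B3 + 1 := by nlinarith [B3_nonneg]
  refine ⟨(M * B3 + 1) * (M + 1), by positivity, ?_⟩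
  intro Ω f hΩ hf hf0 hfM hmom
  -- a.e. pointwise bound in x
  have hae : ∀ᵐ x ∂(volume.restrict Ω), ∀ᵐ v : E3, f (x, v) ≤ M :=
    Measure.ae_ae_of_ae_prod hfM
  have step1 : (∫⁻ x in Ω, (ENNReal.ofReal ‖∫ v : E3, f (x, v) • v‖) ^ p)
      ≤ ENNReal.ofReal (M * B3 + 1) ^ p
        * ∫⁻ x in Ω, ∫⁻ v : E3, ENNReal.ofReal (‖v‖ ^ κ * f (x, v)) := by
    rw [← lintegral_const_mul' _ _ (by
      exact ENNReal.rpow_ne_top_of_nonneg hp.le ENNReal.ofReal_ne_top)]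
    refine lintegral_mono_ae ?_
    filter_upwards [hae] with x hx
    exact key M κ p hM hκ1 hp hpκ (fun v => f (x, v))
      (hf.comp measurable_prodMk_left) (fun v => hf0 x v) hx
  have step2 : (∫⁻ x in Ω, (ENNReal.ofReal ‖∫ v : E3, f (x, v) • v‖) ^ p)
      ≤ ENNReal.ofReal (M * B3 + 1) ^ p * ENNReal.ofReal M := by
    refine step1.trans ?_
    gcongr
    exact hmom κ (by linarith) hκκ₀
  calc (∫⁻ x in Ω, (ENNReal.ofReal ‖∫ v : E3, f (x, v) • v‖) ^ p) ^ (1 / p)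
      ≤ (ENNReal.ofReal (M * B3 + 1) ^ p * ENNReal.ofReal M) ^ (1 / p) :=
        ENNReal.rpow_le_rpow step2 (by positivity)
    _ = ENNReal.ofReal (M * B3 + 1) * ENNReal.ofReal M ^ (1 / p) := by
        rw [ENNReal.mul_rpow_of_nonneg _ _ (by positivity), ← ENNReal.rpow_mul,
          mul_one_div, div_self hp.ne', ENNReal.rpow_one]
    _ ≤ ENNReal.ofReal (M * B3 + 1) * ENNReal.ofReal (M + 1) := by
        gcongr
        rw [ENNReal.ofReal_rpow_of_pos hM]
        refine ENNReal.ofReal_le_ofReal ?_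
        rcases le_total M 1 with h | h
        · have := Real.rpow_le_one (z := 1/p) hM.le h (by positivity)
          linarith
        · have : M ^ (1/p) ≤ M ^ (1:ℝ) :=
            Real.rpow_le_rpow_of_exponent_le h (by
              rw [div_le_one hp]; linarith)
          rw [Real.rpow_one] at this
          linarith
    _ = ENNReal.ofReal ((M * B3 + 1) * (M + 1)) := by
        rw [← ENNReal.ofReal_mul (by positivity)]
end
end

section
/- Let T > 0, a ≥ 0, b ≥ 0, and let y : [0,T] → ℝ be differentiable with y(t) ≥ 0 for all t and y′(t) ≤ a + b√(y(t)) − y(t) for all t ∈ [0,T]. Then for all t ∈ [0,T]: y(t) ≤ max{ y(0), ((b + √(b² + 4a))/2)² }. -/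
open Set

/-- If `u > r²` where `r = (b+√(b²+4a))/2`, then `a + b√u − u < 0`. -/
lemma stmt14_aux (a b u : ℝ) (ha : 0 ≤ a) (hb : 0 ≤ b) (hu0 : 0 ≤ u)
    (hu : ((b + Real.sqrt (b ^ 2 + 4 * a)) / 2) ^ 2 < u) :
    a + b * Real.sqrt u - u < 0 := by
  set r : ℝ := (b + Real.sqrt (b ^ 2 + 4 * a)) / 2 with hrdef
  have hs0 : 0 ≤ b ^ 2 + 4 * a := by positivity
  have hs : Real.sqrt (b ^ 2 + 4 * a) ^ 2 = b ^ 2 + 4 * a := Real.sq_sqrt hs0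
  have hsb : b ≤ Real.sqrt (b ^ 2 + 4 * a) := by
    have : b = Real.sqrt (b ^ 2) := by
      rw [Real.sqrt_sq hb]
    rw [this]
    exact Real.sqrt_le_sqrt (by nlinarith)
  have hr0 : 0 ≤ r := by
    have := Real.sqrt_nonneg (b ^ 2 + 4 * a)
    rw [hrdef]; linarith
  have hr2 : r ^ 2 = b * r + a := by
    rw [hrdef]; nlinarith [hs]
  have h2r : b ≤ 2 * r := by rw [hrdef]; linarith
  set z : ℝ := Real.sqrt u with hzdef
  have hz2 : z ^ 2 = u := Real.sq_sqrt hu0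
  have hz : r < z := by
    rw [hzdef]
    exact (Real.lt_sqrt hr0).2 hu
  have hpos : 0 < (z - r) * (z + r - b) :=
    mul_pos (by linarith) (by linarith)
  nlinarith [hpos, hr2, hz2]

/-- ODE comparison principle behind the time-uniform moment
bound: if `y ≥ 0` is differentiable on `[0,T]` and
`y' ≤ a + b√y − y` there, then
`y(t) ≤ max { y(0), ((b + √(b² + 4a))/2)² }` on `[0,T]`. -/
theorem stmt14 (T a b : ℝ) (hT : 0 < T) (ha : 0 ≤ a) (hb : 0 ≤ b)
    (y : ℝ → ℝ)
    (hdiff : ∀ t ∈ Set.Icc (0 : ℝ) T, DifferentiableAt ℝ y t)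
    (hpos : ∀ t ∈ Set.Icc (0 : ℝ) T, 0 ≤ y t)
    (hode : ∀ t ∈ Set.Icc (0 : ℝ) T,
      deriv y t ≤ a + b * Real.sqrt (y t) - y t) :
    ∀ t ∈ Set.Icc (0 : ℝ) T,
      y t ≤ max (y 0) (((b + Real.sqrt (b ^ 2 + 4 * a)) / 2) ^ 2) := by
  set K : ℝ := ((b + Real.sqrt (b ^ 2 + 4 * a)) / 2) ^ 2 with hKdef
  set M : ℝ := max (y 0) K with hMdef
  have hKM : K ≤ M := le_max_right _ _
  intro t₀ ht₀
  by_contra hcon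
  push_neg at hcon
  have hy0 : y 0 ≤ M := le_max_left _ _
  have ht₀0 : 0 < t₀ := by
    rcases lt_or_eq_of_le ht₀.1 with h | h
    · exact h
    · exfalso; rw [← h] at hcon; linarith
  -- the set of good times in [0, t₀]
  set S : Set ℝ := {t | t ∈ Set.Icc (0 : ℝ) t₀ ∧ y t ≤ M} with hSdef
  have hsub : Set.Icc (0 : ℝ) t₀ ⊆ Set.Icc (0 : ℝ) T :=
    Set.Icc_subset_Icc le_rfl ht₀.2
  have h0S : (0 : ℝ) ∈ S := ⟨⟨le_rfl, le_of_lt ht₀0⟩, hy0⟩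
  have hSne : S.Nonempty := ⟨0, h0S⟩
  have hbdd : BddAbove S := ⟨t₀, fun x hx => hx.1.2⟩
  set s : ℝ := sSup S with hsdef
  have hs0 : 0 ≤ s := le_csSup hbdd h0S
  have hst₀ : s ≤ t₀ := csSup_le hSne fun x hx => hx.1.2
  have hsT : s ∈ Set.Icc (0 : ℝ) T := hsub ⟨hs0, hst₀⟩
  have hcs : ContinuousAt y s := (hdiff s hsT).continuousAt
  -- y s ≤ M
  have hys : y s ≤ M := by
    by_contra hys
    push_neg at hys
    have hnhds : y ⁻¹' Set.Ioi M ∈ nhds s := hcs (Ioi_mem_nhds hys)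
    rcases Metric.mem_nhds_iff.1 hnhds with ⟨δ, hδ, hball⟩
    rcases exists_lt_of_lt_csSup hSne (show s - δ < s by linarith) with ⟨x, hxS, hxgt⟩
    have hxle : x ≤ s := le_csSup hbdd hxS
    have hxball : x ∈ Metric.ball s δ := by
      rw [Metric.mem_ball, Real.dist_eq, abs_lt]
      constructor <;> linarith
    have := hball hxball
    exact absurd hxS.2 (not_le.2 this)
  have hslt : s < t₀ := by
    rcases lt_or_eq_of_le hst₀ with h | h
    · exact h
    · exfalso; rw [h] at hys; linarith
  -- between s and t₀, y is above M
  have habove : ∀ t, s < t → t ≤ t₀ → M < y t := by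
    intro t hst ht
    by_contra h
    push_neg at h
    have : t ∈ S := ⟨⟨le_trans hs0 (le_of_lt hst), ht⟩, h⟩
    exact absurd (le_csSup hbdd this) (not_le.2 hst)
  -- MVT on [s, t₀]
  have hcont : ContinuousOn y (Set.Icc s t₀) := fun x hx =>
    ((hdiff x (hsub ⟨le_trans hs0 hx.1, hx.2⟩)).continuousAt).continuousWithinAt
  have hdif : DifferentiableOn ℝ y (Set.Ioo s t₀) := fun x hx =>
    (hdiff x (hsub ⟨le_trans hs0 (le_of_lt hx.1), le_of_lt hx.2⟩)).differentiableWithinAt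
  obtain ⟨c, hc, hderiv⟩ := exists_deriv_eq_slope y hslt hcont hdif
  have hcT : c ∈ Set.Icc (0 : ℝ) T :=
    hsub ⟨le_trans hs0 (le_of_lt hc.1), le_of_lt hc.2⟩
  have hyc : M < y c := habove c hc.1 (le_of_lt hc.2)
  have hneg : a + b * Real.sqrt (y c) - y c < 0 :=
    stmt14_aux a b (y c) ha hb (hpos c hcT) (lt_of_le_of_lt hKM hyc)
  have hslope : 0 < (y t₀ - y s) / (t₀ - s) :=
    div_pos (by linarith) (by linarith)
  have := hode c hcT
  rw [hderiv] at this
  linarith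
end
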